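/- Hölder-type estimate: let 0 < α < 1/2, γ ∈ [0,1], and define φ(γ,α) = 2α if γ = 1, φ(γ,α) any number > 1 + (2α-1)/γ if (1-2α)/(1-α) ≤ γ < 1, and φ(γ,α) = α if 0 ≤ γ < (1-2α)/(1-α). Then for every measurable bounded f : [-r, T-r] → ℝ and t ∈ (0,T], ∫_{-r}^{t-r} |f(s)|^γ (t-r-s)^{-2α} ds ≤ C_α (∫_{-r}^{t-r} |f(s)| (t-r-s)^{-φ(γ,α)} ds)^γ · t^{1-γ-2α+φ(γ,α)γ}, for a constant C_α depending only on α, γ, T; moreover the exponent satisfies 1-γ-2α+φ(γ,α)γ ≥ 0 and α < φ(γ,α) ≤ 2α (in the case (1-2α)/(1-α) ≤ γ < 1, choosing φ(γ,α) accordingly). -/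

import Mathlib

open Real MeasureTheory intervalIntegral
open scoped ENNReal

lemma aux_sub_rpow_intervalIntegrable {a b β : ℝ} (hβ : -1 < β) :
    IntervalIntegrable (fun s => (b - s) ^ β) volume a b := by
  have h := (intervalIntegrable_rpow' (a := b - a) (b := 0) hβ).comp_sub_left b
  simpa using h

lemma aux_sub_rpow_integral {a b β : ℝ} (hβ : -1 < β) :
    ∫ s in a..b, (b - s) ^ β = (b - a) ^ (β + 1) / (β + 1) := by
  rw [intervalIntegral.integral_comp_sub_left (fun u => u ^ β) b, sub_self,
    integral_rpow (Or.inl hβ), Real.zero_rpow (by linarith), sub_zero]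

lemma aux_holder_main {a b γ φ c : ℝ} (hab : a < b) (hγ0 : 0 < γ) (hγ1 : γ < 1)
    (hφ0 : 0 < φ) (hφ1 : φ < 1) (hc0 : 0 < c) (hc1 : c < 1)
    (hβ : -1 < (φ * γ - c) / (1 - γ))
    (f : ℝ → ℝ) (hf : Measurable f) (M : ℝ) (hM : ∀ s, |f s| ≤ M) :
    (∫ s in a..b, |f s| ^ γ * (b - s) ^ (-c)) ≤
      (1 / ((φ * γ - c) / (1 - γ) + 1)) ^ (1 - γ) *
        (∫ s in a..b, |f s| * (b - s) ^ (-φ)) ^ γ * (b - a) ^ (1 - γ - c + φ * γ) := by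
  set β : ℝ := (φ * γ - c) / (1 - γ) with hβdef
  have h1γ : 0 < 1 - γ := by linarith
  have hβ1 : 0 < β + 1 := by linarith
  have hβ1γ : β * (1 - γ) = φ * γ - c := by
    rw [hβdef]; field_simp
  set μ : Measure ℝ := volume.restrict (Set.Ioo a b) with hμ
  have hmem : ∀ᵐ s ∂μ, s ∈ Set.Ioo a b := ae_restrict_mem measurableSet_Ioo
  set w : ℝ → ℝ := fun s => |f s| * (b - s) ^ (-φ) with hw
  set w2 : ℝ → ℝ := fun s => (b - s) ^ β with hw2
  set u : ℝ → ℝ := fun s => (w s) ^ γ with hu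
  set v : ℝ → ℝ := fun s => (b - s) ^ (φ * γ - c) with hv
  have hmw : Measurable w := by rw [hw]; fun_prop
  have hmw2 : Measurable w2 := by rw [hw2]; fun_prop
  -- integrability
  have hint : ∀ β' : ℝ, -1 < β' → Integrable (fun s => (b - s) ^ β') μ := by
    intro β' hβ'
    have h := (intervalIntegrable_iff_integrableOn_Ioc_of_le hab.le).mp
      (aux_sub_rpow_intervalIntegrable (a := a) (b := b) hβ')
    exact h.mono_set Set.Ioo_subset_Ioc_self
  have hiw2 : Integrable w2 μ := hint β hβ
  have hiw : Integrable w μ := by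
    refine (hint (-φ) (by linarith)).bdd_mul (c := M) (hf.abs.aestronglyMeasurable) (Filter.Eventually.of_forall fun x => ?_)
    simpa [abs_abs] using hM x
  have hw_nn : 0 ≤ᵐ[μ] w := by
    filter_upwards [hmem] with s hs
    exact mul_nonneg (abs_nonneg _) (Real.rpow_nonneg (by linarith [hs.2]) _)
  have hw2_nn : 0 ≤ᵐ[μ] w2 := by
    filter_upwards [hmem] with s hs
    exact Real.rpow_nonneg (by linarith [hs.2]) _
  have hu_nn : 0 ≤ᵐ[μ] u := by
    filter_upwards [hw_nn] with s hs
    exact Real.rpow_nonneg hs _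
  have hv_nn : 0 ≤ᵐ[μ] v := by
    filter_upwards [hmem] with s hs
    exact Real.rpow_nonneg (by linarith [hs.2]) _
  -- MemLp conditions
  have hgen : ∀ (g : ℝ → ℝ) (δ : ℝ), 0 < δ → δ < 1 → Measurable g → Integrable g μ →
      0 ≤ᵐ[μ] g → MemLp (fun s => (g s) ^ δ) (ENNReal.ofReal (1 / δ)) μ := by
    intro g δ hδ0 hδ1 hg hgint hg_nn
    have hq0 : ENNReal.ofReal δ ≠ 0 := by
      simp [ENNReal.ofReal_eq_zero, not_le, hδ0]
    have h0 : MemLp (fun x => ‖g x‖ ^ (ENNReal.ofReal δ).toReal)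
        ((1 : ℝ≥0∞) / ENNReal.ofReal δ) μ :=
      (memLp_norm_rpow_iff hg.aestronglyMeasurable hq0 ENNReal.ofReal_ne_top).mpr
        (memLp_one_iff_integrable.mpr hgint)
    have hdiv : (1 : ℝ≥0∞) / ENNReal.ofReal δ = ENNReal.ofReal (1 / δ) := by
      rw [ENNReal.ofReal_div_of_pos hδ0, ENNReal.ofReal_one]
    rw [hdiv] at h0
    refine h0.ae_eq ?_
    filter_upwards [hg_nn] with x hx
    rw [ENNReal.toReal_ofReal hδ0.le, Real.norm_eq_abs, abs_of_nonneg hx]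
  have hu_mem : MemLp u (ENNReal.ofReal (1 / γ)) μ :=
    hgen w γ hγ0 hγ1 hmw hiw hw_nn
  have hv_mem : MemLp v (ENNReal.ofReal (1 / (1 - γ))) μ := by
    have h0 := hgen w2 (1 - γ) h1γ (by linarith) hmw2 hiw2 hw2_nn
    refine h0.ae_eq ?_
    filter_upwards [hmem] with x hx
    have hbx : (0:ℝ) ≤ b - x := by linarith [hx.2]
    rw [hw2, hv]
    show ((b - x) ^ β) ^ (1 - γ) = (b - x) ^ (φ * γ - c)
    rw [← Real.rpow_mul hbx, hβ1γ]
  have hp : (1 / γ).HolderConjugate (1 / (1 - γ)) := by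
    rw [Real.holderConjugate_iff]
    constructor
    · rw [lt_div_iff₀ hγ0]; linarith
    · rw [one_div, one_div, inv_inv, inv_inv]; ring
  have hHolder := integral_mul_le_Lp_mul_Lq_of_nonneg hp hu_nn hv_nn hu_mem hv_mem
  rw [one_div_one_div, one_div_one_div] at hHolder
  -- identify the three integrals
  have E1 : (∫ s in a..b, |f s| ^ γ * (b - s) ^ (-c)) = ∫ x, u x * v x ∂μ := by
    rw [intervalIntegral.integral_of_le hab.le, integral_Ioc_eq_integral_Ioo]
    refine MeasureTheory.integral_congr_ae ?_
    filter_upwards [ae_restrict_mem measurableSet_Ioo] with x hx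
    have hbx : (0:ℝ) < b - x := by linarith [hx.2]
    show |f x| ^ γ * (b - x) ^ (-c) = (|f x| * (b - x) ^ (-φ)) ^ γ * (b - x) ^ (φ * γ - c)
    rw [Real.mul_rpow (abs_nonneg _) (Real.rpow_nonneg hbx.le _), ← Real.rpow_mul hbx.le,
      mul_assoc, ← Real.rpow_add hbx]
    congr 1
    ring
  have E2 : (∫ x, u x ^ (1 / γ) ∂μ) = ∫ s in a..b, |f s| * (b - s) ^ (-φ) := by
    rw [intervalIntegral.integral_of_le hab.le, integral_Ioc_eq_integral_Ioo]
    refine MeasureTheory.integral_congr_ae ?_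
    filter_upwards [ae_restrict_mem measurableSet_Ioo] with x hx
    have hbx : (0:ℝ) < b - x := by linarith [hx.2]
    have hwx : 0 ≤ w x := mul_nonneg (abs_nonneg _) (Real.rpow_nonneg hbx.le _)
    show (w x ^ γ) ^ (1 / γ) = |f x| * (b - x) ^ (-φ)
    rw [← Real.rpow_mul hwx, mul_one_div, div_self (ne_of_gt hγ0), Real.rpow_one]
  have E3 : (∫ x, v x ^ (1 / (1 - γ)) ∂μ) = (b - a) ^ (β + 1) / (β + 1) := by
    have : (∫ x, v x ^ (1 / (1 - γ)) ∂μ) = ∫ s in a..b, (b - s) ^ β := by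
      rw [intervalIntegral.integral_of_le hab.le, integral_Ioc_eq_integral_Ioo]
      refine (MeasureTheory.integral_congr_ae ?_).symm
      filter_upwards [ae_restrict_mem measurableSet_Ioo] with x hx
      have hbx : (0:ℝ) ≤ b - x := by linarith [hx.2]
      show (b - x) ^ β = ((b - x) ^ (φ * γ - c)) ^ (1 / (1 - γ))
      rw [← Real.rpow_mul hbx]
      congr 1
      rw [hβdef]; field_simp
    rw [this, aux_sub_rpow_integral hβ]
  rw [E2, E3] at hHolder
  have hba : (0:ℝ) ≤ b - a := by linarith
  have hJ : ((b - a) ^ (β + 1) / (β + 1)) ^ (1 - γ) =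
      (1 / (β + 1)) ^ (1 - γ) * (b - a) ^ (1 - γ - c + φ * γ) := by
    rw [Real.div_rpow (Real.rpow_nonneg hba _) hβ1.le, ← Real.rpow_mul hba,
      one_div, Real.inv_rpow hβ1.le, ← one_div]
    rw [show (β + 1) * (1 - γ) = 1 - γ - c + φ * γ by nlinarith [hβ1γ]]
    ring
  calc (∫ s in a..b, |f s| ^ γ * (b - s) ^ (-c)) = ∫ x, u x * v x ∂μ := E1
    _ ≤ (∫ s in a..b, |f s| * (b - s) ^ (-φ)) ^ γ *
        ((b - a) ^ (β + 1) / (β + 1)) ^ (1 - γ) := hHolder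
    _ = (1 / (β + 1)) ^ (1 - γ) *
        (∫ s in a..b, |f s| * (b - s) ^ (-φ)) ^ γ * (b - a) ^ (1 - γ - c + φ * γ) := by
        rw [hJ]; ring

/-- Hölder-type estimate with the piecewise exponent `φ(γ,α)`. -/
theorem stmt_11 (α γ φ r T : ℝ) (hα : 0 < α) (hα2 : α < 1/2)
    (hγ0 : 0 ≤ γ) (hγ1 : γ ≤ 1) (hr : 0 ≤ r) (hT : r < T)
    -- the piecewise choice of φ(γ,α)
    (hφ1 : γ = 1 → φ = 2 * α)
    (hφ2 : (1 - 2*α)/(1 - α) ≤ γ → γ < 1 → (1 + (2*α - 1)/γ < φ ∧ φ ≤ 2*α))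
    (hφ3 : γ < (1 - 2*α)/(1 - α) → φ = α) :
    (∃ C > 0, ∀ f : ℝ → ℝ, Measurable f → (∃ M, ∀ s, |f s| ≤ M) →
      ∀ t ∈ Set.Ioc (0:ℝ) T,
        (∫ s in (-r)..(t - r), |f s| ^ γ * (t - r - s) ^ (-(2*α))) ≤
          C * (∫ s in (-r)..(t - r), |f s| * (t - r - s) ^ (-φ)) ^ γ *
            t ^ (1 - γ - 2*α + φ * γ)) ∧
    1 - γ - 2*α + φ * γ ≥ 0 ∧ α ≤ φ ∧ φ ≤ 2*α := by
  have h1α : 0 < 1 - α := by linarith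
  have h12α : 0 < 1 - 2*α := by linarith
  rcases eq_or_lt_of_le hγ1 with hγeq | hγlt
  · -- γ = 1
    have hφ := hφ1 hγeq
    subst hγeq
    rw [hφ]
    refine ⟨⟨1, one_pos, ?_⟩, by norm_num, by linarith, le_refl _⟩
    intro f hf hbdd t ht
    rw [show (1 - 1 - 2*α + 2*α*1 : ℝ) = 0 by ring, Real.rpow_zero]
    simp only [Real.rpow_one, one_mul, mul_one]
    exact le_refl _
  · -- γ < 1
    rcases eq_or_lt_of_le hγ0 with hγeq0 | hγpos
    · -- γ = 0
      subst hγeq0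
      have hthr : (0:ℝ) < (1 - 2*α)/(1 - α) := div_pos h12α h1α
      have hφ := hφ3 hthr
      rw [hφ]
      refine ⟨⟨1/(1-2*α), by positivity, ?_⟩, by norm_num; linarith, le_refl _, by linarith⟩
      intro f hf hbdd t ht
      obtain ⟨ht0, htT⟩ := ht
      simp only [Real.rpow_zero, one_mul, mul_one]
      have hI : (∫ s in (-r)..(t - r), (t - r - s) ^ (-(2*α))) =
          t ^ (1 - 2*α) / (1 - 2*α) := by
        have h := aux_sub_rpow_integral (a := -r) (b := t - r) (β := -(2*α)) (by linarith)
        rw [show (t - r - -r : ℝ) = t by ring, show (-(2*α) + 1 : ℝ) = 1 - 2*α by ring] at h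
        exact h
      rw [hI, show (1 - 0 - 2*α + α*0 : ℝ) = 1 - 2*α by ring]
      rw [div_eq_mul_inv, one_div]
      exact le_of_eq (by ring)
    · -- 0 < γ < 1
      have h1γ : 0 < 1 - γ := by linarith
      have key : α ≤ φ ∧ φ ≤ 2*α ∧ -1 < (φ * γ - 2*α) / (1 - γ) := by
        by_cases hthr : γ < (1 - 2*α)/(1 - α)
        · have hφ := hφ3 hthr
          have h' : γ * (1 - α) < 1 - 2*α := (lt_div_iff₀ h1α).mp hthr
          refine ⟨hφ.ge, by rw [hφ]; linarith, ?_⟩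
          rw [hφ, lt_div_iff₀ h1γ]
          nlinarith
        · push_neg at hthr
          have h' : 1 - 2*α ≤ γ * (1 - α) := by
            have := (div_le_iff₀ h1α).mp hthr
            linarith
          obtain ⟨hl, hu⟩ := hφ2 hthr hγlt
          have hl' : γ + (2*α - 1) < φ * γ := by
            have := mul_lt_mul_of_pos_right hl hγpos
            rw [add_mul, div_mul_cancel₀ _ (ne_of_gt hγpos)] at this
            linarith
          refine ⟨?_, hu, ?_⟩
          · nlinarith
          · rw [lt_div_iff₀ h1γ]
            nlinarith
      obtain ⟨hαφ, hφ2α, hβ⟩ := key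
      set β : ℝ := (φ * γ - 2*α) / (1 - γ) with hβdef
      have hβ1 : 0 < β + 1 := by linarith
      have hexp : 0 ≤ 1 - γ - 2*α + φ * γ := by
        have h' : -1 * (1 - γ) < φ * γ - 2*α := (lt_div_iff₀ h1γ).mp hβ
        nlinarith
      refine ⟨⟨(1/(β+1)) ^ (1 - γ), Real.rpow_pos_of_pos (by positivity) _, ?_⟩,
        hexp, hαφ, hφ2α⟩
      intro f hf hbdd t ht
      obtain ⟨M, hM⟩ := hbdd
      obtain ⟨ht0, htT⟩ := ht
      have h := aux_holder_main (a := -r) (b := t - r) (c := 2*α)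
        (by linarith) hγpos hγlt (by linarith) (by linarith) (by linarith) (by linarith)
        hβ f hf M hM
      rw [show (t - r - -r : ℝ) = t by ring] at h
      exact h
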